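/- Let a(t,x,ξ) be a smooth real-valued function defined on a neighborhood of ρ' = (0,x₀,ξ₀) ∈ ℝ × ℝ^d × ℝ^d, with a(ρ') = 0 and all first-order partial derivatives of a vanishing at ρ', and suppose a(t,x,ξ) ≥ 0 whenever 0 ≤ t < δ and (x,ξ) is near (x₀,ξ₀), for some δ > 0. Let Q(t,x,ξ) denote the quadratic part of a at ρ', i.e. Q(v) = (1/2)⟨v, (Hess a)(ρ') v⟩ for v = (t,x,ξ). Let φ(x,ξ) be a smooth real-valued function near (x₀,ξ₀) and let 0 < κ < 1 be such that {φ,a}(t,x,ξ)² ≤ 4κ·a(t,x,ξ) for all 0 ≤ t < δ and (x,ξ) near (x₀,ξ₀). Then Q(0, ∇_ξφ(x₀,ξ₀), −∇_xφ(x₀,ξ₀)) < 1; equivalently, the function f(t,x,ξ) = t − φ(x,ξ) is a time function for p = −τ² + Q at ρ = (0,x₀,0,ξ₀), meaning p_ρ(−H_f(ρ')) < 0 where p_ρ(t,x,τ,ξ) = −τ² + Q(t,x,ξ) and H_f = (0, −∂φ/∂ξ, −1, ∂φ/∂x) is the Hamilton vector field of f in the coordinates (t,x,τ,ξ). -/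

import Mathlib

open Filter Set Topology

private lemma decomp_aux (d : ℕ) (f g : Fin d → ℝ) :
    (((0:ℝ), f, g) : ℝ × (Fin d → ℝ) × (Fin d → ℝ)) =
      ∑ j : Fin d, (f j • (((0:ℝ), (Pi.single j 1 : Fin d → ℝ), (0 : Fin d → ℝ)) :
          ℝ × (Fin d → ℝ) × (Fin d → ℝ)) +
        g j • (((0:ℝ), (0 : Fin d → ℝ), (Pi.single j 1 : Fin d → ℝ)) :
          ℝ × (Fin d → ℝ) × (Fin d → ℝ))) := by
  have h1 : ∀ h : Fin d → ℝ, (∑ j : Fin d, h j • (Pi.single j 1 : Fin d → ℝ)) = h := by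
    intro h
    ext i
    simp [Finset.sum_apply, Pi.single_apply]
  rw [Prod.ext_iff]
  refine ⟨by simp [Prod.fst_sum], ?_⟩
  rw [Prod.ext_iff]
  constructor
  · simp only [Prod.smul_mk, Prod.mk_add_mk, smul_zero, add_zero, Prod.snd_sum, Prod.fst_sum]
    exact (h1 f).symm
  · simp only [Prod.smul_mk, Prod.mk_add_mk, smul_zero, zero_add, Prod.snd_sum]
    exact (h1 g).symm

private lemma conclude_aux (L κ : ℝ) (hκ0 : 0 < κ) (hκ1 : κ < 1)
    (key : L^2 ≤ 4*κ*(L/2)) : 1/2 * L < 1 := by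
  rcases le_or_gt L 0 with hL0 | hL0
  · linarith
  · nlinarith [key, hL0]



/-- If `a(t, x, ξ) ≥ 0` for `0 ≤ t < δ` near `ρ' = (0, x₀, ξ₀)`, `a` vanishes to first
order at `ρ'`, `Q` is the quadratic part of `a` at `ρ'`, and the Poisson bracket bound
`{φ, a}² ≤ 4 κ a` holds with `0 < κ < 1`, then `Q(0, ∇_ξ φ(x₀,ξ₀), -∇_x φ(x₀,ξ₀)) < 1`,
i.e. `f = t - φ` is a time function for `p = -τ² + Q` at `ρ = (0, x₀, 0, ξ₀)`. -/
theorem time_function_of_poisson_bracket_bound (d : ℕ) (hd : 1 ≤ d)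
    (x₀ ξ₀ : Fin d → ℝ)
    (a : ℝ × (Fin d → ℝ) × (Fin d → ℝ) → ℝ)
    (W : Set (ℝ × (Fin d → ℝ) × (Fin d → ℝ))) (hW : IsOpen W)
    (hρ'W : ((0 : ℝ), x₀, ξ₀) ∈ W)
    (ha : ContDiffOn ℝ (⊤ : ℕ∞) a W)
    (ha0 : a (0, x₀, ξ₀) = 0)
    (hgrad : fderiv ℝ a (0, x₀, ξ₀) = 0)
    (δ : ℝ) (hδ : 0 < δ)
    (V : Set ((Fin d → ℝ) × (Fin d → ℝ))) (hV : IsOpen V) (hV0 : (x₀, ξ₀) ∈ V)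
    (hVW : ∀ t ∈ Set.Ico (0 : ℝ) δ, ∀ z ∈ V, (t, z.1, z.2) ∈ W)
    (hnn : ∀ t ∈ Set.Ico (0 : ℝ) δ, ∀ z ∈ V, 0 ≤ a (t, z.1, z.2))
    (φ : (Fin d → ℝ) × (Fin d → ℝ) → ℝ) (hφ : ContDiffOn ℝ (⊤ : ℕ∞) φ V)
    (κ : ℝ) (hκ0 : 0 < κ) (hκ1 : κ < 1)
    (hbracket : ∀ t ∈ Set.Ico (0 : ℝ) δ, ∀ z ∈ V,
      (∑ j : Fin d,
          (fderiv ℝ φ z ((0 : Fin d → ℝ), Pi.single j 1)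
              * fderiv ℝ a (t, z.1, z.2) ((0 : ℝ), Pi.single j 1, (0 : Fin d → ℝ))
            - fderiv ℝ φ z (Pi.single j 1, (0 : Fin d → ℝ))
              * fderiv ℝ a (t, z.1, z.2) ((0 : ℝ), (0 : Fin d → ℝ), Pi.single j 1))) ^ 2
        ≤ 4 * κ * a (t, z.1, z.2)) :
    ∀ v : ℝ × (Fin d → ℝ) × (Fin d → ℝ),
      v = ((0 : ℝ),
            (fun j => fderiv ℝ φ (x₀, ξ₀) ((0 : Fin d → ℝ), Pi.single j 1)),
            (fun j => -fderiv ℝ φ (x₀, ξ₀) (Pi.single j 1, (0 : Fin d → ℝ)))) →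
      (1 / 2) * fderiv ℝ (fun w => fderiv ℝ a w v) ((0 : ℝ), x₀, ξ₀) v < 1 := by
  classical
  intro v hv
  have hv1 : v.1 = 0 := by rw [hv]
  -- the curve c s = ρ' + s • v  (with first component 0)
  set z : ℝ → (Fin d → ℝ) × (Fin d → ℝ) := fun s => (x₀, ξ₀) + s • v.2 with hzdef
  set c : ℝ → ℝ × (Fin d → ℝ) × (Fin d → ℝ) := fun s => ((0:ℝ), (z s).1, (z s).2) with hcdef
  have hz0 : z 0 = (x₀, ξ₀) := by simp [hzdef]
  have hc0 : c 0 = ((0:ℝ), x₀, ξ₀) := by rw [hcdef]; simp only [hz0]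
  have hWn : W ∈ 𝓝 (((0:ℝ), x₀, ξ₀) : ℝ × (Fin d → ℝ) × (Fin d → ℝ)) := hW.mem_nhds hρ'W
  have haF : ContDiffOn ℝ (⊤ : ℕ∞) (fderiv ℝ a) W :=
    ha.fderiv_of_isOpen hW (by exact_mod_cast le_top)
  have hFdiff : DifferentiableAt ℝ (fderiv ℝ a) ((0:ℝ), x₀, ξ₀) :=
    (haF.contDiffAt hWn).differentiableAt (by simp)
  set A := fderiv ℝ (fderiv ℝ a) ((0:ℝ), x₀, ξ₀) with hA
  set L : ℝ := A v v with hL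
  -- derivatives of z and c
  have hzd : ∀ s : ℝ, HasDerivAt z v.2 s := by
    intro s
    have h := ((hasDerivAt_id s).smul_const v.2).const_add ((x₀, ξ₀))
    rw [one_smul] at h
    exact h
  have hcd : ∀ s : ℝ, HasDerivAt c v s := by
    intro s
    have h0 : HasDerivAt (fun _ : ℝ => (0:ℝ)) 0 s := hasDerivAt_const s 0
    have h1 := h0.prodMk (hzd s)
    have hveq : (((0:ℝ), v.2) : ℝ × (Fin d → ℝ) × (Fin d → ℝ)) = v := by rw [← hv1]
    rw [hveq] at h1
    exact h1
  have hF0 : ∀ u, fderiv ℝ a ((0:ℝ), x₀, ξ₀) u = 0 := fun u => by rw [hgrad]; rfl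
  -- derivative of s ↦ ∂a(c s)(u) at 0
  have hder : ∀ u : ℝ × (Fin d → ℝ) × (Fin d → ℝ),
      HasDerivAt (fun s => fderiv ℝ a (c s) u) (A v u) 0 := by
    intro u
    have hev : HasFDerivAt (fun w => fderiv ℝ a w u)
        ((ContinuousLinearMap.apply ℝ ℝ u).comp A) ((0:ℝ), x₀, ξ₀) :=
      (ContinuousLinearMap.apply ℝ ℝ u).hasFDerivAt.comp _ hFdiff.hasFDerivAt
    have hev' : HasFDerivAt (fun w => fderiv ℝ a w u)
        ((ContinuousLinearMap.apply ℝ ℝ u).comp A) (c 0) := by rw [hc0]; exact hev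
    have h2 := hev'.comp_hasDerivAt 0 (hcd 0)
    exact h2
  -- slope limits
  have hslope : ∀ u : ℝ × (Fin d → ℝ) × (Fin d → ℝ),
      Tendsto (fun s => fderiv ℝ a (c s) u / s) (𝓝[>] (0:ℝ)) (𝓝 (A v u)) := by
    intro u
    have h1 := (hasDerivAt_iff_tendsto_slope.mp (hder u)).mono_left
      (nhdsWithin_mono 0 (fun s hs => (ne_of_gt hs : s ≠ 0)))
    refine h1.congr fun s => ?_
    rw [slope_def_field]
    rw [hc0, hF0 u]
    ring
  -- eventually z s ∈ V and c s ∈ W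
  have hzc : Continuous z := by
    rw [hzdef]; fun_prop
  have hzV : ∀ᶠ s in 𝓝 (0:ℝ), z s ∈ V := by
    apply hzc.continuousAt.eventually_mem
    rw [hz0]; exact hV.mem_nhds hV0
  have hcW : ∀ᶠ s in 𝓝 (0:ℝ), c s ∈ W :=
    hzV.mono (fun s hs => hVW 0 ⟨le_refl 0, hδ⟩ (z s) hs)
  -- the bracket function
  set bb : ℝ → ℝ := fun s => ∑ j : Fin d,
      (fderiv ℝ φ (z s) ((0 : Fin d → ℝ), Pi.single j 1)
          * fderiv ℝ a (c s) ((0 : ℝ), Pi.single j 1, (0 : Fin d → ℝ))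
        - fderiv ℝ φ (z s) (Pi.single j 1, (0 : Fin d → ℝ))
          * fderiv ℝ a (c s) ((0 : ℝ), (0 : Fin d → ℝ), Pi.single j 1)) with hbbdef
  -- the eventual inequality
  have hineq : ∀ᶠ s in 𝓝[>] (0:ℝ), (bb s / s)^2 ≤ 4*κ*(a (c s)/s^2) := by
    filter_upwards [hzV.filter_mono nhdsWithin_le_nhds, self_mem_nhdsWithin] with s hsV hs
    have hb : (bb s)^2 ≤ 4 * κ * a (c s) := hbracket 0 ⟨le_refl 0, hδ⟩ (z s) hsV
    have hs2 : (0:ℝ) < s^2 := pow_pos hs 2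
    calc (bb s / s)^2 = (bb s)^2 / s^2 := div_pow _ _ _
    _ ≤ (4*κ*a (c s)) / s^2 := by gcongr
    _ = 4*κ*(a (c s)/s^2) := by ring
  -- continuity of fderiv φ along z
  have hφc : ∀ u : (Fin d → ℝ) × (Fin d → ℝ),
      Tendsto (fun s => fderiv ℝ φ (z s) u) (𝓝 (0:ℝ)) (𝓝 (fderiv ℝ φ (x₀, ξ₀) u)) := by
    intro u
    have h1 : ContinuousAt (fderiv ℝ φ) (x₀, ξ₀) :=
      (hφ.continuousOn_fderiv_of_isOpen hV (by exact_mod_cast le_top)).continuousAt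
        (hV.mem_nhds hV0)
    have h1' : ContinuousAt (fderiv ℝ φ) (z 0) := by rw [hz0]; exact h1
    have h2 : ContinuousAt (fun s => fderiv ℝ φ (z s)) 0 := h1'.comp hzc.continuousAt
    have h3 : ContinuousAt (fun s => fderiv ℝ φ (z s) u) 0 :=
      ((ContinuousLinearMap.apply ℝ ℝ u).continuous.continuousAt).comp h2
    have h4 := h3.tendsto
    rw [hz0] at h4
    exact h4
  -- limit of bb s / s
  have hT1 : Tendsto (fun s => bb s / s) (𝓝[>] (0:ℝ)) (𝓝 L) := by
    have hterm : ∀ j : Fin d, Tendsto (fun s =>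
        fderiv ℝ φ (z s) ((0 : Fin d → ℝ), Pi.single j 1)
          * (fderiv ℝ a (c s) ((0 : ℝ), Pi.single j 1, (0 : Fin d → ℝ)) / s)
        - fderiv ℝ φ (z s) (Pi.single j 1, (0 : Fin d → ℝ))
          * (fderiv ℝ a (c s) ((0 : ℝ), (0 : Fin d → ℝ), Pi.single j 1) / s)) (𝓝[>] (0:ℝ))
        (𝓝 (fderiv ℝ φ (x₀, ξ₀) ((0 : Fin d → ℝ), Pi.single j 1)
            * A v ((0 : ℝ), Pi.single j 1, (0 : Fin d → ℝ))
          - fderiv ℝ φ (x₀, ξ₀) (Pi.single j 1, (0 : Fin d → ℝ))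
            * A v ((0 : ℝ), (0 : Fin d → ℝ), Pi.single j 1))) :=
      fun j => ((((hφc _).mono_left nhdsWithin_le_nhds).mul (hslope _)).sub
        (((hφc _).mono_left nhdsWithin_le_nhds).mul (hslope _)))
    have hsum := tendsto_finset_sum Finset.univ (fun j _ => hterm j)
    have hLsum : (∑ j : Fin d,
        (fderiv ℝ φ (x₀, ξ₀) ((0 : Fin d → ℝ), Pi.single j 1)
            * A v ((0 : ℝ), Pi.single j 1, (0 : Fin d → ℝ))
          - fderiv ℝ φ (x₀, ξ₀) (Pi.single j 1, (0 : Fin d → ℝ))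
            * A v ((0 : ℝ), (0 : Fin d → ℝ), Pi.single j 1))) = L := by
    -- L = A v v and v decomposes in the basis
      have hvsum : v = ∑ j : Fin d,
          ((fderiv ℝ φ (x₀, ξ₀) ((0 : Fin d → ℝ), Pi.single j 1)) •
            (((0:ℝ), (Pi.single j 1 : Fin d → ℝ), (0 : Fin d → ℝ)) :
              ℝ × (Fin d → ℝ) × (Fin d → ℝ)) +
          (-(fderiv ℝ φ (x₀, ξ₀) (Pi.single j 1, (0 : Fin d → ℝ)))) •
            (((0:ℝ), (0 : Fin d → ℝ), (Pi.single j 1 : Fin d → ℝ)) :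
              ℝ × (Fin d → ℝ) × (Fin d → ℝ))) := by
        rw [hv]
        exact decomp_aux d _ _
      rw [hL]
      set B := A v with hBdef
      conv_rhs => rw [hvsum]
      rw [map_sum]
      refine Finset.sum_congr rfl fun j _ => ?_
      rw [map_add, map_smul, map_smul]
      simp only [smul_eq_mul]
      ring
    rw [← hLsum]
    refine hsum.congr fun s => ?_
    rw [hbbdef]
    rw [Finset.sum_div]
    refine Finset.sum_congr rfl fun j _ => by ring
  -- limit of a (c s) / s², by L'Hôpital
  have hca : Tendsto (fun s => a (c s)) (𝓝[>] (0:ℝ)) (𝓝 0) := by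
    have hacont : ContinuousAt a ((0:ℝ), x₀, ξ₀) := (ha.contDiffAt hWn).continuousAt
    have hacont' : ContinuousAt a (c 0) := by rw [hc0]; exact hacont
    have h2 := (hacont'.comp (hcd 0).continuousAt).tendsto
    rw [Function.comp] at h2
    have h3 : a (c 0) = 0 := by rw [hc0]; exact ha0
    rw [h3] at h2
    exact h2.mono_left nhdsWithin_le_nhds
  have hT2 : Tendsto (fun s => a (c s) / s^2) (𝓝[>] (0:ℝ)) (𝓝 (L/2)) := by
    apply HasDerivAt.lhopital_zero_nhdsGT
      (f' := fun s => fderiv ℝ a (c s) v) (g' := fun s => 2*s)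
    · filter_upwards [hcW.filter_mono nhdsWithin_le_nhds] with s hsW
      exact (((ha.contDiffAt (hW.mem_nhds hsW)).differentiableAt
        (by simp)).hasFDerivAt).comp_hasDerivAt s (hcd s)
    · exact Eventually.of_forall (fun s => by simpa using hasDerivAt_pow 2 s)
    · filter_upwards [self_mem_nhdsWithin] with s hs
      exact mul_ne_zero two_ne_zero (ne_of_gt hs)
    · exact hca
    · exact Tendsto.mono_left (by simpa using (continuous_pow 2).tendsto (0:ℝ))
        nhdsWithin_le_nhds
    · have h1 := (hslope v).div_const 2
      refine h1.congr fun s => ?_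
      rw [div_div, mul_comm]
  -- pass to the limit in the inequality
  have h1 : Tendsto (fun s => (bb s/s)^2) (𝓝[>] (0:ℝ)) (𝓝 (L^2)) := hT1.pow 2
  have h2 : Tendsto (fun s => 4*κ*(a (c s)/s^2)) (𝓝[>] (0:ℝ)) (𝓝 (4*κ*(L/2))) :=
    tendsto_const_nhds.mul hT2
  have key : L^2 ≤ 4*κ*(L/2) := le_of_tendsto_of_tendsto h1 h2 hineq
  -- identify the goal quantity with L
  have hgoal : fderiv ℝ (fun w => fderiv ℝ a w v) ((0:ℝ), x₀, ξ₀) v = L := by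
    have hev : HasFDerivAt (fun w => fderiv ℝ a w v)
        ((ContinuousLinearMap.apply ℝ ℝ v).comp A) ((0:ℝ), x₀, ξ₀) :=
      (ContinuousLinearMap.apply ℝ ℝ v).hasFDerivAt.comp _ hFdiff.hasFDerivAt
    rw [hev.fderiv]
    rfl
  rw [hgoal]
  exact conclude_aux L κ hκ0 hκ1 key
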